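/- Let p, q be relatively prime positive integers and let t_{ij}(p,q)/(i!j!) denote the coefficient of x₁^i x₂^j in the Todd series Td_{pq}(x₁,x₂) of the cone generated by (1,0) and (p,q). Then for i, j ≥ 1: t_{ij}(p,q) = −(−q)^{i+j−1}·(s_{ij}(p,q) + δ(i,j)·B_i·B_j), where δ(i,j) = 1 if i = 1 or j = 1 and 0 otherwise, B_i is the i-th Bernoulli number, and s_{ij}(p,q) is the generalized Dedekind sum. -/

import Mathlib

open scoped BigOperators Classical

/-- `e(x) = exp(2πix)`. -/
noncomputable def eQ (x : ℚ) : ℂ := Complex.exp (2 * (Real.pi : ℂ) * Complex.I * (x : ℂ))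

/-- The `k`-th periodic Bernoulli function, as a function on `ℚ`. -/
noncomputable def periodicBernoulli (k : ℕ) (x : ℚ) : ℚ :=
  if x.den = 1 then (if k = 1 then 0 else bernoulli k)
  else (Polynomial.bernoulli k).eval (Int.fract x)

/-- The generalized Dedekind sum `s_{ij}(p,q)`. -/
noncomputable def genDedekindSum (i j : ℕ) (p : ℤ) (q : ℕ) : ℚ :=
  ∑ k ∈ Finset.range q,
    periodicBernoulli i ((k : ℚ) / q) * periodicBernoulli j ((p * k : ℚ) / q)

/-- The power series `e^{-x} = ∑ (-1)^n x^n / n!`. -/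
noncomputable def expNeg : PowerSeries ℂ :=
  PowerSeries.mk fun n => ((-1 : ℂ)) ^ n / n.factorial

/-- The one-variable twisted Todd power series `Td^λ(x) = x/(1-λe^{-x})`:
for `λ = 1` it is `∑ B'_n x^n/n!` (Bernoulli numbers with `B'₁ = 1/2`), and for
`λ ≠ 1` the constant term of `1 - λe^{-x}` is nonzero so it is invertible. -/
noncomputable def toddLambda (l : ℂ) : PowerSeries ℂ :=
  if l = 1 then PowerSeries.mk fun n => ((bernoulli' n : ℚ) : ℂ) / n.factorial
  else PowerSeries.X * (1 - PowerSeries.C (R := ℂ) l * expNeg)⁻¹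

/-- `t_{ij}(p,q)`: `i!j!` times the `x₁^i x₂^j`-coefficient of the Todd series
`Td_{pq}(x₁,x₂) = ∑_{t∈ℤ/q} Td^{χ₁(t)}(x₁) Td^{χ₂(t)}(x₂)` of the cone generated by
`(1,0)` and `(p,q)`, where `χ₁(t) = e(-pt/q)`, `χ₂(t) = e(t/q)`. -/
noncomputable def toddCoeff (p q i j : ℕ) : ℂ :=
  (i.factorial : ℂ) * j.factorial *
    ∑ t ∈ Finset.range q,
      (PowerSeries.coeff (R := ℂ) i (toddLambda (eQ (((-(p * t : ℤ) : ℤ) : ℚ) / q)))) *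
      (PowerSeries.coeff (R := ℂ) j (toddLambda (eQ ((t : ℚ) / q))))


section Aux
open PowerSeries Polynomial

noncomputable def BG {A : Type*} [CommRing A] [Algebra ℚ A] (t : A) : PowerSeries A :=
  PowerSeries.mk fun n => Polynomial.aeval t ((1 / (n.factorial : ℚ)) • Polynomial.bernoulli n)

lemma BG_mul (A : Type*) [CommRing A] [Algebra ℚ A] (t : A) :
    BG t * (exp A - 1) = PowerSeries.X * rescale t (exp A) :=
  Polynomial.bernoulli_generating_function t

lemma expNeg_eq : expNeg = rescale (-1 : ℂ) (exp ℂ) := by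
  ext n
  simp only [expNeg, coeff_mk, coeff_rescale, coeff_exp]
  push_cast
  ring

lemma rescale_exp_mul_exp (A : Type*) [CommRing A] [Algebra ℚ A] (a : A) :
    rescale a (exp A) * exp A = rescale (a + 1) (exp A) := by
  rw [← exp_mul_exp_eq_exp_add a 1, rescale_one]
  rfl

lemma expSub_ne_zero (A : Type*) [CommRing A] [Algebra ℚ A] [NoZeroDivisors A] [Nontrivial A]
    [CharZero A] : (exp A - 1 : PowerSeries A) ≠ 0 := by
  intro h
  have := congrArg (PowerSeries.coeff (R := A) 1) h
  simp [coeff_exp] at this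

lemma bernoulli_eval_one_neg (n : ℕ) (t : ℚ) :
    (Polynomial.bernoulli n).eval (1 - t) = (-1) ^ n * (Polynomial.bernoulli n).eval t := by
  have key : BG (1 - t) = rescale (-1) (BG t) := by
    have h1 : BG (1 - t) * (exp ℚ - 1) = PowerSeries.X * rescale (1 - t) (exp ℚ) := BG_mul ℚ _
    have h2 : rescale (-1) (BG t) * (rescale (-1) (exp ℚ) - 1)
        = -(PowerSeries.X * rescale (-t) (exp ℚ)) := by
      have h := congrArg (rescale (-1 : ℚ)) (BG_mul ℚ t)
      rw [map_mul, map_sub, map_one, map_mul, rescale_X, rescale_rescale,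
        show t * (-1 : ℚ) = -t by ring, map_neg, map_one] at h
      rw [h]; ring
    have e1 : rescale (-1 : ℚ) (exp ℚ) * exp ℚ = 1 := by
      rw [rescale_exp_mul_exp, neg_add_cancel, rescale_zero]
      simp [PowerSeries.exp]
    have e2 : rescale (-t) (exp ℚ) * exp ℚ = rescale (1 - t) (exp ℚ) := by
      rw [rescale_exp_mul_exp, show -t + 1 = 1 - t by ring]
    have h3 : rescale (-1) (BG t) * (exp ℚ - 1) = PowerSeries.X * rescale (1 - t) (exp ℚ) := by
      linear_combination (-(exp ℚ)) * h2 + rescale (-1 : ℚ) (BG t) * e1 + PowerSeries.X * e2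
    exact mul_right_cancel₀ (expSub_ne_zero ℚ) (h1.trans h3.symm)
  have h := congrArg (PowerSeries.coeff (R := ℚ) n) key
  simp only [BG, coeff_mk, coeff_rescale, map_smul, smul_eq_mul,
    Polynomial.aeval_def, Polynomial.eval₂_eq_eval_map, Polynomial.map_id] at h
  have hn : ((n.factorial : ℚ)) ≠ 0 := Nat.cast_ne_zero.mpr n.factorial_ne_zero
  field_simp at h
  simpa [Polynomial.map_id, mul_comm] using h

lemma expNeg_mul_exp : expNeg * exp ℂ = 1 := by
  rw [expNeg_eq, rescale_exp_mul_exp, neg_add_cancel, rescale_zero]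
  simp [PowerSeries.exp]

lemma coeff_BG (t : ℂ) (n : ℕ) :
    PowerSeries.coeff (R := ℂ) n (BG t) = Polynomial.aeval t (Polynomial.bernoulli n) / n.factorial := by
  simp only [BG, coeff_mk, map_smul, Rat.smul_def]
  push_cast
  ring

lemma rescaleExpSub_ne_zero {c : ℂ} (hc : c ≠ 0) : rescale c (exp ℂ) - 1 ≠ 0 := by
  intro h
  have := congrArg (PowerSeries.coeff (R := ℂ) 1) h
  simp [coeff_rescale, coeff_exp] at this
  exact hc this

lemma shift (c u : ℂ) (hc : c ≠ 0) :
    expNeg * rescale c (BG u) = rescale c (BG (u - 1 / c)) := by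
  apply mul_right_cancel₀ (rescaleExpSub_ne_zero hc)
  have base : ∀ v : ℂ, rescale c (BG v) * (rescale c (exp ℂ) - 1)
      = PowerSeries.C (R := ℂ) c * PowerSeries.X * rescale (v * c) (exp ℂ) := by
    intro v
    have h := congrArg (rescale c) (BG_mul ℂ v)
    rw [map_mul, map_sub, map_one, map_mul, rescale_X, rescale_rescale] at h
    rw [h]
  rw [mul_assoc, base u, base (u - 1/c)]
  have e1 : expNeg * rescale (u * c) (exp ℂ) = rescale (u * c - 1) (exp ℂ) := by
    rw [expNeg_eq, exp_mul_exp_eq_exp_add]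
    ring_nf
  have : (u - 1 / c) * c = u * c - 1 := by field_simp
  rw [this, show expNeg * (PowerSeries.C (R := ℂ) c * PowerSeries.X * rescale (u * c) (exp ℂ))
      = PowerSeries.C (R := ℂ) c * PowerSeries.X * (expNeg * rescale (u * c) (exp ℂ)) by ring, e1]

lemma BG_one_sub_BG_zero : BG (1 : ℂ) - BG 0 = PowerSeries.X := by
  ext n
  simp only [map_sub, coeff_BG, PowerSeries.coeff_X]
  rw [show ((1:ℂ)) = algebraMap ℚ ℂ 1 by norm_num, show ((0:ℂ)) = algebraMap ℚ ℂ 0 by norm_num,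
    Polynomial.aeval_algebraMap_apply, Polynomial.aeval_algebraMap_apply]
  have : ∀ x : ℚ, Polynomial.aeval x (Polynomial.bernoulli n) = (Polynomial.bernoulli n).eval x := by
    intro x; simp [Polynomial.aeval_def, Polynomial.eval₂_eq_eval_map]
  rw [this, this, Polynomial.bernoulli_eval_one, Polynomial.bernoulli_eval_zero]
  rcases eq_or_ne n 1 with rfl | hn
  · norm_num [bernoulli'_one, _root_.bernoulli_one]
  · rw [bernoulli_eq_bernoulli'_of_ne_one hn]
    simp [hn, PowerSeries.coeff_X]

noncomputable def Fq (q : ℕ) (l : ℂ) : PowerSeries ℂ :=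
  PowerSeries.C (R := ℂ) (q : ℂ)⁻¹ *
    ∑ k ∈ Finset.range q, PowerSeries.C (R := ℂ) (l ^ k) * rescale (q : ℂ) (BG (1 - (k : ℂ) / q))

lemma key_mul (q : ℕ) (hq : 0 < q) (l : ℂ) (hl : l ^ q = 1) :
    (1 - PowerSeries.C (R := ℂ) l * expNeg) * Fq q l = PowerSeries.X := by
  have hqc : (q : ℂ) ≠ 0 := Nat.cast_ne_zero.mpr hq.ne'
  set a : ℕ → PowerSeries ℂ :=
    fun k => PowerSeries.C (R := ℂ) (l ^ k) * rescale (q : ℂ) (BG (1 - (k : ℂ) / q)) with ha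
  have step : ∀ k, (1 - PowerSeries.C (R := ℂ) l * expNeg) * a k = a k - a (k + 1) := by
    intro k
    have : expNeg * rescale (q : ℂ) (BG (1 - (k : ℂ) / q))
        = rescale (q : ℂ) (BG (1 - ((k : ℂ) + 1) / q)) := by
      rw [shift _ _ hqc]
      congr 1
      field_simp
      ring_nf
    rw [ha]
    simp only [pow_succ, map_mul, Nat.cast_add, Nat.cast_one]
    rw [sub_mul, one_mul]
    congr 1
    calc PowerSeries.C (R := ℂ) l * expNeg * (PowerSeries.C (R := ℂ) (l ^ k) * rescale (q : ℂ) (BG (1 - (k : ℂ) / q)))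
        = PowerSeries.C (R := ℂ) (l ^ k) * PowerSeries.C (R := ℂ) l *
            (expNeg * rescale (q : ℂ) (BG (1 - (k : ℂ) / q))) := by ring
      _ = _ := by rw [this]
  have tel : (1 - PowerSeries.C (R := ℂ) l * expNeg) * (∑ k ∈ Finset.range q, a k) = a 0 - a q := by
    rw [Finset.mul_sum]
    rw [show (∑ k ∈ Finset.range q, (1 - PowerSeries.C (R := ℂ) l * expNeg) * a k)
      = ∑ k ∈ Finset.range q, (a k - a (k + 1)) from Finset.sum_congr rfl fun k _ => step k]
    exact Finset.sum_range_sub' a q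
  have ha0 : a 0 = rescale (q : ℂ) (BG 1) := by simp [ha]
  have haq : a q = rescale (q : ℂ) (BG 0) := by
    rw [ha]
    simp only [hl, map_one, one_mul]
    rw [div_self hqc, sub_self]
  rw [Fq, show (1 - PowerSeries.C (R := ℂ) l * expNeg) * (PowerSeries.C (R := ℂ) (q:ℂ)⁻¹ * ∑ k ∈ Finset.range q, a k)
      = PowerSeries.C (R := ℂ) (q:ℂ)⁻¹ * ((1 - PowerSeries.C (R := ℂ) l * expNeg) * ∑ k ∈ Finset.range q, a k) by ring,
    tel, ha0, haq, ← map_sub, BG_one_sub_BG_zero, rescale_X, ← mul_assoc, ← map_mul,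
    inv_mul_cancel₀ hqc, map_one, one_mul]

lemma constantCoeff_expNeg : PowerSeries.constantCoeff (R := ℂ) expNeg = 1 := by
  simp [expNeg, PowerSeries.constantCoeff_mk]

lemma oneSub_ne_zero (l : ℂ) (hl : l ≠ 0) : (1 - PowerSeries.C (R := ℂ) l * expNeg) ≠ 0 := by
  intro h
  rcases eq_or_ne l 1 with rfl | h1
  · have := congrArg (PowerSeries.coeff (R := ℂ) 1) h
    simp [expNeg, PowerSeries.coeff_mk, PowerSeries.coeff_X] at this
  · have := congrArg (PowerSeries.constantCoeff (R := ℂ)) h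
    simp [constantCoeff_expNeg, sub_eq_zero] at this
    exact h1 this.symm

lemma todd_mul (l : ℂ) (hl : l ≠ 0) :
    (1 - PowerSeries.C (R := ℂ) l * expNeg) * toddLambda l = PowerSeries.X := by
  rcases eq_or_ne l 1 with rfl | h1
  · rw [toddLambda, if_pos rfl]
    have hB : (PowerSeries.mk fun n => ((bernoulli' n : ℚ) : ℂ) / n.factorial)
        = bernoulli'PowerSeries ℂ := by
      ext n
      simp only [PowerSeries.coeff_mk, bernoulli'PowerSeries, PowerSeries.coeff_mk]
      push_cast
      exact (div_eq_mul_inv _ _).symm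
    have h := bernoulli'PowerSeries_mul_exp_sub_one ℂ
    have h2 := congrArg (· * expNeg) h
    rw [mul_assoc, mul_assoc, show (exp ℂ - 1) * expNeg = 1 - expNeg by
      rw [sub_mul, one_mul, mul_comm, expNeg_mul_exp], show exp ℂ * expNeg = 1 by
      rw [mul_comm, expNeg_mul_exp], mul_one] at h2
    rw [hB, map_one, one_mul, mul_comm]
    exact h2
  · rw [toddLambda, if_neg h1]
    rw [show (1 - PowerSeries.C (R := ℂ) l * expNeg) * (PowerSeries.X * (1 - PowerSeries.C (R := ℂ) l * expNeg)⁻¹)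
      = PowerSeries.X * ((1 - PowerSeries.C (R := ℂ) l * expNeg) * (1 - PowerSeries.C (R := ℂ) l * expNeg)⁻¹) by ring]
    rw [PowerSeries.mul_inv_cancel, mul_one]
    rw [map_sub, map_one, map_mul, constantCoeff_expNeg, PowerSeries.constantCoeff_C]
    simpa [sub_eq_zero] using fun h => h1 h.symm

lemma toddLambda_eq_Fq (q : ℕ) (hq : 0 < q) (l : ℂ) (hl : l ^ q = 1) :
    toddLambda l = Fq q l := by
  have hl0 : l ≠ 0 := by
    intro h; rw [h] at hl; simp [zero_pow hq.ne'] at hl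
  exact mul_left_cancel₀ (oneSub_ne_zero l hl0) ((todd_mul l hl0).trans (key_mul q hq l hl).symm)

lemma coeff_toddLambda (q : ℕ) (hq : 0 < q) (l : ℂ) (hl : l ^ q = 1) (n : ℕ) :
    PowerSeries.coeff (R := ℂ) n (toddLambda l)
      = (q : ℂ)⁻¹ * ∑ k ∈ Finset.range q,
          l ^ k * ((q : ℂ) ^ n * (Polynomial.aeval (1 - (k : ℂ) / q) (Polynomial.bernoulli n)
            / n.factorial)) := by
  rw [toddLambda_eq_Fq q hq l hl, Fq, PowerSeries.coeff_C_mul, map_sum]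
  congr 1
  refine Finset.sum_congr rfl fun k _ => ?_
  rw [PowerSeries.coeff_C_mul, coeff_rescale, coeff_BG]


lemma aeval_ratCast' (n : ℕ) (x : ℚ) :
    Polynomial.aeval ((x : ℂ)) (Polynomial.bernoulli n)
      = (((Polynomial.bernoulli n).eval x : ℚ) : ℂ) := by
  rw [← eq_ratCast (algebraMap ℚ ℂ) x, Polynomial.aeval_algebraMap_apply,
    show (Polynomial.aeval x) (Polynomial.bernoulli n) = (Polynomial.bernoulli n).eval x from by
      simp [Polynomial.aeval_def, Polynomial.eval₂_eq_eval_map], eq_ratCast]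

lemma coeff_todd' (q : ℕ) (hq : 0 < q) (l : ℂ) (hl : l ^ q = 1) (n : ℕ) :
    PowerSeries.coeff (R := ℂ) n (toddLambda l)
      = (q : ℂ)⁻¹ * ∑ k ∈ Finset.range q,
          l ^ k * ((q : ℂ) ^ n *
            ((((Polynomial.bernoulli n).eval (1 - (k : ℚ) / q) : ℚ) : ℂ) / n.factorial)) := by
  rw [coeff_toddLambda q hq l hl n]
  congr 1
  refine Finset.sum_congr rfl fun k _ => ?_
  rw [show (1 - (k : ℂ) / q) = (((1 - (k : ℚ) / q : ℚ)) : ℂ) by push_cast; ring, aeval_ratCast']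

lemma den_one_iff (a : ℤ) (q : ℕ) (hq : 0 < q) : ((a : ℚ) / q).den = 1 ↔ (q : ℤ) ∣ a := by
  have hq0 : (q : ℚ) ≠ 0 := by positivity
  constructor
  · intro h
    have h2 := (Rat.den_eq_one_iff _).mp h
    refine ⟨((a : ℚ) / q).num, ?_⟩
    have : (a : ℚ) = (q : ℚ) * ((a : ℚ) / q).num := by
      rw [h2]; field_simp
    exact_mod_cast this
  · rintro ⟨d, rfl⟩
    have : ((q * d : ℤ) : ℚ) / q = (d : ℚ) := by push_cast; field_simp
    rw [this]; exact Rat.den_intCast d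

lemma fract_nat_div (k q : ℕ) (hk : k < q) : Int.fract ((k : ℚ) / q) = (k : ℚ) / q := by
  have hq0 : (0:ℚ) < q := by exact_mod_cast lt_of_le_of_lt (Nat.zero_le k) hk
  rw [Int.fract_eq_self]
  refine ⟨by positivity, ?_⟩
  rw [div_lt_one hq0]; exact_mod_cast hk

lemma fract_mul_div (a q : ℕ) (hq : 0 < q) :
    Int.fract ((a : ℚ) / q) = ((a % q : ℕ) : ℚ) / q := by
  have hq0 : (q:ℚ) ≠ 0 := by positivity
  have hdm : a = q * (a / q) + a % q := (Nat.div_add_mod a q).symm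
  have key : (a : ℚ) / q = ((a / q : ℕ) : ℚ) + ((a % q : ℕ) : ℚ) / q := by
    field_simp
    exact_mod_cast congrArg (Nat.cast : ℕ → ℚ) (hdm.trans (by ring))
  rw [key, show ((a / q : ℕ) : ℚ) = (((a / q : ℕ) : ℤ) : ℚ) from by norm_cast,
    Int.fract_intCast_add]
  exact fract_nat_div _ _ (Nat.mod_lt _ hq)

lemma bernoulli_odd_zero {n : ℕ} (hod : Odd n) (hn : 1 < n) : (_root_.bernoulli n : ℚ) = 0 := by
  rw [bernoulli_eq_bernoulli'_of_ne_one (by omega), bernoulli'_eq_zero_of_odd hod hn]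

lemma casework (i j : ℕ) (hi : 1 ≤ i) (hj : 1 ≤ j) :
    (bernoulli' i : ℚ) * bernoulli' j =
      (-1) ^ (i + j) *
        ((if i = 1 then (0:ℚ) else _root_.bernoulli i) *
            (if j = 1 then (0:ℚ) else _root_.bernoulli j)
          + (if i = 1 ∨ j = 1 then (1:ℚ) else 0) * _root_.bernoulli i * _root_.bernoulli j) := by
  rcases eq_or_ne i 1 with rfl | hi1 <;> rcases eq_or_ne j 1 with rfl | hj1
  · norm_num [bernoulli'_one, _root_.bernoulli_one]
  · have hj2 : 1 < j := by omega
    simp only [if_pos rfl, if_neg hj1, true_or, if_pos, zero_mul, zero_add]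
    rcases Nat.even_or_odd j with hev | hod
    · have hodd : Odd (1 + j) := by rw [Nat.add_comm]; exact Even.add_one hev
      rw [Odd.neg_one_pow hodd, bernoulli'_one,
        ← bernoulli_eq_bernoulli'_of_ne_one hj1, _root_.bernoulli_one]
      ring
    · rw [bernoulli'_eq_zero_of_odd hod hj2, bernoulli_odd_zero hod hj2]
      ring
  · have hi2 : 1 < i := by omega
    simp only [if_pos rfl, if_neg hi1, or_true, if_pos, mul_zero, zero_add]
    rcases Nat.even_or_odd i with hev | hod
    · have hodd : Odd (i + 1) := Even.add_one hev
      rw [Odd.neg_one_pow hodd, bernoulli'_one,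
        ← bernoulli_eq_bernoulli'_of_ne_one hi1, _root_.bernoulli_one]
      ring
    · rw [bernoulli'_eq_zero_of_odd hod hi2, bernoulli_odd_zero hod hi2]
      ring
  · have hi2 : 1 < i := by omega
    have hj2 : 1 < j := by omega
    simp only [if_neg hi1, if_neg hj1, if_neg (by tauto : ¬(i = 1 ∨ j = 1)), zero_mul, add_zero]
    rw [← bernoulli_eq_bernoulli'_of_ne_one hi1, ← bernoulli_eq_bernoulli'_of_ne_one hj1]
    rcases Nat.even_or_odd (i + j) with hev | hod
    · rw [Even.neg_one_pow hev, one_mul]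
    · rcases Nat.even_or_odd i with hei | hoi
      · have hoj : Odd j := by
          rcases Nat.even_or_odd j with hej | hoj
          · exact absurd hod (by simp [Nat.even_add, Nat.even_iff, Nat.odd_iff] at *; omega)
          · exact hoj
        rw [bernoulli_odd_zero hoj hj2]
        ring
      · rw [bernoulli_odd_zero hoi hi2]
        ring

theorem ratMain (p q : ℕ) (hq : 0 < q) (hco : Nat.Coprime p q) (i j : ℕ)
    (hi : 1 ≤ i) (hj : 1 ≤ j) :
    (∑ k ∈ Finset.range q, (Polynomial.bernoulli i).eval (1 - (k : ℚ) / q) *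
        (Polynomial.bernoulli j).eval (1 - ((p * k % q : ℕ) : ℚ) / q))
      = (-1) ^ (i + j) * (genDedekindSum i j (p : ℤ) q +
          (if i = 1 ∨ j = 1 then (1:ℚ) else 0) * _root_.bernoulli i * _root_.bernoulli j) := by
  have h0 : (0 : ℕ) ∈ Finset.range q := by simpa using hq
  rw [Finset.sum_eq_sum_sdiff_singleton_add h0, genDedekindSum,
    Finset.sum_eq_sum_sdiff_singleton_add h0]
  have e0L : (Polynomial.bernoulli i).eval (1 - ((0:ℕ) : ℚ) / q) *
      (Polynomial.bernoulli j).eval (1 - ((p * 0 % q : ℕ) : ℚ) / q)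
      = (bernoulli' i : ℚ) * bernoulli' j := by
    rw [Nat.mul_zero, Nat.zero_mod]
    norm_num [Polynomial.bernoulli_eval_one]
  have e0R : periodicBernoulli i (((0:ℕ) : ℚ) / q) * periodicBernoulli j (((p : ℤ) * (0:ℕ) : ℚ) / q)
      = (if i = 1 then (0:ℚ) else _root_.bernoulli i) *
        (if j = 1 then (0:ℚ) else _root_.bernoulli j) := by
    norm_num [periodicBernoulli]
  have hrest : ∀ k ∈ Finset.range q \ {0},
      (Polynomial.bernoulli i).eval (1 - (k : ℚ) / q) *
        (Polynomial.bernoulli j).eval (1 - ((p * k % q : ℕ) : ℚ) / q)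
      = (-1) ^ (i + j) *
        (periodicBernoulli i ((k : ℚ) / q) * periodicBernoulli j (((p : ℤ) * k : ℚ) / q)) := by
    intro k hk
    simp only [Finset.mem_sdiff, Finset.mem_range, Finset.mem_singleton] at hk
    obtain ⟨hklt, hkne⟩ := hk
    have hknd : ¬ q ∣ k := Nat.not_dvd_of_pos_of_lt (Nat.pos_of_ne_zero hkne) hklt
    have hpknd : ¬ q ∣ p * k := fun h => hknd (hco.symm.dvd_of_dvd_mul_left h)
    have hden1 : ((k : ℚ) / q).den ≠ 1 := by
      intro h
      rw [show (k : ℚ) = ((k : ℤ) : ℚ) by norm_cast] at h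
      exact hknd (by exact_mod_cast (den_one_iff _ _ hq).mp h)
    have hden2 : ((((p : ℤ)) * k : ℚ) / q).den ≠ 1 := by
      intro h
      rw [show ((p : ℤ) : ℚ) * (k : ℚ) = (((p * k : ℕ) : ℤ) : ℚ) by push_cast; ring] at h
      exact hpknd (by exact_mod_cast (den_one_iff _ _ hq).mp h)
    rw [periodicBernoulli, if_neg hden1, periodicBernoulli, if_neg hden2,
      fract_nat_div k q hklt,
      show ((p : ℤ) : ℚ) * (k : ℚ) / q = ((p * k : ℕ) : ℚ) / q by push_cast; ring,
      fract_mul_div _ _ hq,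
      bernoulli_eval_one_neg i ((k : ℚ) / q), bernoulli_eval_one_neg j (((p * k % q : ℕ) : ℚ) / q),
      pow_add]
    ring
  rw [Finset.sum_congr rfl hrest, e0L, e0R, ← Finset.mul_sum, casework i j hi hj]
  ring


lemma eQ_intCast (n : ℤ) : eQ n = 1 := by
  rw [eQ, show 2 * (Real.pi : ℂ) * Complex.I * (((n : ℚ) : ℂ))
      = (n : ℂ) * (2 * (Real.pi : ℂ) * Complex.I) by push_cast; ring]
  exact Complex.exp_int_mul_two_pi_mul_I n

lemma eQ_pow (x : ℚ) (n : ℕ) : eQ x ^ n = eQ (n * x) := by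
  rw [eQ, eQ, ← Complex.exp_nat_mul]
  congr 1
  push_cast
  ring

lemma eQ_mul (x y : ℚ) : eQ x * eQ y = eQ (x + y) := by
  rw [eQ, eQ, eQ, ← Complex.exp_add]
  congr 1
  push_cast
  ring

lemma eQ_pow_q (c : ℤ) (q : ℕ) (hq : 0 < q) : eQ ((c : ℚ) / q) ^ q = 1 := by
  have hq0 : (q : ℚ) ≠ 0 := by positivity
  rw [eQ_pow, show (q : ℚ) * ((c : ℚ) / q) = (c : ℚ) by field_simp, eQ_intCast]

lemma eQ_ne_one (c : ℤ) (q : ℕ) (hq : 0 < q) (h : ¬ (q : ℤ) ∣ c) : eQ ((c : ℚ) / q) ≠ 1 := by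
  intro he
  rw [eQ, Complex.exp_eq_one_iff] at he
  obtain ⟨n, hn⟩ := he
  have hne : (2 * (Real.pi : ℂ) * Complex.I) ≠ 0 := by
    simp [Real.pi_ne_zero, Complex.I_ne_zero]
  have h2 : (((c : ℚ) / q : ℚ) : ℂ) = ((n : ℂ)) :=
    mul_left_cancel₀ hne (by rw [hn]; ring)
  have h3 : ((c : ℚ) / q : ℚ) = (n : ℚ) := by exact_mod_cast h2
  have hq0 : (q : ℚ) ≠ 0 := by positivity
  rw [div_eq_iff hq0] at h3
  exact h ⟨n, by exact_mod_cast h3.trans (mul_comm _ _)⟩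

lemma orth (q : ℕ) (hq : 0 < q) (c : ℤ) :
    ∑ t ∈ Finset.range q, eQ ((c : ℚ) / q) ^ t
      = if (q : ℤ) ∣ c then (q : ℂ) else 0 := by
  split_ifs with h
  · obtain ⟨d, rfl⟩ := h
    have hq0 : (q : ℚ) ≠ 0 := by positivity
    have h1 : ((q * d : ℤ) : ℚ) / q = ((d : ℤ) : ℚ) := by push_cast; field_simp
    rw [h1, eQ_intCast]
    simp
  · rw [geom_sum_eq (eQ_ne_one c q hq h), eQ_pow_q c q hq]
    simp

lemma dvd_sub_iff (q : ℕ) (hq : 0 < q) (a m : ℕ) (hm : m < q) :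
    (q : ℤ) ∣ ((m : ℤ) - a) ↔ m = a % q := by
  constructor
  · rintro ⟨d, hd⟩
    have h1 : (m : ℤ) = a + q * d := by linarith
    have h2 : (m : ℤ) % q = (a : ℤ) % q := by rw [h1, Int.add_mul_emod_self_left]
    rw [Int.emod_eq_of_lt (by positivity) (by exact_mod_cast hm), ← Int.natCast_mod] at h2
    exact_mod_cast h2
  · rintro rfl
    refine ⟨-((a / q : ℕ) : ℤ), ?_⟩
    have h2 : (a : ℤ) = q * ((a / q : ℕ) : ℤ) + ((a % q : ℕ) : ℤ) := by
      exact_mod_cast (Nat.div_add_mod a q).symm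
    rw [h2]
    push_cast
    ring

end Aux

theorem stmt8 (p q : ℕ) (hp : 0 < p) (hq : 0 < q) (hco : Nat.Coprime p q)
    (i j : ℕ) (hi : 1 ≤ i) (hj : 1 ≤ j) :
    toddCoeff p q i j =
      -(-(q : ℂ)) ^ (i + j - 1) *
        ((genDedekindSum i j p q +
          (if i = 1 ∨ j = 1 then (1 : ℚ) else 0) * bernoulli i * bernoulli j : ℚ) : ℂ) := by
  have hq0 : (q : ℂ) ≠ 0 := Nat.cast_ne_zero.mpr hq.ne'
  have hfi : (i.factorial : ℂ) ≠ 0 := Nat.cast_ne_zero.mpr i.factorial_ne_zero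
  have hfj : (j.factorial : ℂ) ≠ 0 := Nat.cast_ne_zero.mpr j.factorial_ne_zero
  have hl1 : ∀ t : ℕ, eQ (((-(p * t : ℤ) : ℤ) : ℚ) / q) ^ q = 1 := fun t => eQ_pow_q _ q hq
  have hl2 : ∀ t : ℕ, eQ ((t : ℚ) / q) ^ q = 1 := fun t => by
    have h1 : ((t : ℚ)) = (((t : ℤ) : ℚ)) := by push_cast; ring
    rw [h1]
    exact eQ_pow_q _ q hq
  set A : ℕ → ℂ := fun k => (((Polynomial.bernoulli i).eval (1 - (k : ℚ) / q) : ℚ) : ℂ) with hA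
  set B : ℕ → ℂ := fun m => (((Polynomial.bernoulli j).eval (1 - (m : ℚ) / q) : ℚ) : ℂ) with hB
  have char : ∀ t k m : ℕ,
      eQ (((-(p * t : ℤ) : ℤ) : ℚ) / q) ^ k * eQ ((t : ℚ) / q) ^ m
        = eQ ((((m : ℤ) - (p * k : ℕ) : ℤ) : ℚ) / q) ^ t := by
    intro t k m
    rw [eQ_pow, eQ_pow, eQ_mul, eQ_pow]
    congr 1
    push_cast
    ring
  have step1 : toddCoeff p q i j
      = ∑ t ∈ Finset.range q, ∑ k ∈ Finset.range q, ∑ m ∈ Finset.range q,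
          eQ ((((m : ℤ) - (p * k : ℕ) : ℤ) : ℚ) / q) ^ t *
            ((q : ℂ) ^ i * (q : ℂ) ^ j * (q : ℂ)⁻¹ * (q : ℂ)⁻¹ * (A k * B m)) := by
    rw [toddCoeff, Finset.mul_sum]
    refine Finset.sum_congr rfl fun t _ => ?_
    rw [coeff_todd' q hq _ (hl1 t) i, coeff_todd' q hq _ (hl2 t) j]
    rw [show ((q : ℂ)⁻¹ * (∑ k ∈ Finset.range q, eQ (((-(p * t : ℤ) : ℤ) : ℚ) / q) ^ k *
            ((q : ℂ) ^ i * (A k / i.factorial)))) *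
          ((q : ℂ)⁻¹ * (∑ m ∈ Finset.range q, eQ ((t : ℚ) / q) ^ m *
            ((q : ℂ) ^ j * (B m / j.factorial))))
        = (q : ℂ)⁻¹ * (q : ℂ)⁻¹ *
            ((∑ k ∈ Finset.range q, eQ (((-(p * t : ℤ) : ℤ) : ℚ) / q) ^ k *
              ((q : ℂ) ^ i * (A k / i.factorial))) *
             (∑ m ∈ Finset.range q, eQ ((t : ℚ) / q) ^ m *
              ((q : ℂ) ^ j * (B m / j.factorial)))) from by ring,
      Finset.sum_mul_sum]
    simp only [Finset.mul_sum]
    refine Finset.sum_congr rfl fun k _ => Finset.sum_congr rfl fun m _ => ?_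
    rw [← char t k m]
    field_simp
  have step2 : toddCoeff p q i j
      = ∑ k ∈ Finset.range q,
          (q : ℂ) ^ i * (q : ℂ) ^ j * (q : ℂ)⁻¹ * (A k * B (p * k % q)) := by
    rw [step1, Finset.sum_comm]
    refine Finset.sum_congr rfl fun k _ => ?_
    rw [Finset.sum_comm]
    have collapse : ∀ m ∈ Finset.range q,
        (∑ t ∈ Finset.range q, eQ ((((m : ℤ) - (p * k : ℕ) : ℤ) : ℚ) / q) ^ t) *
          ((q : ℂ) ^ i * (q : ℂ) ^ j * (q : ℂ)⁻¹ * (q : ℂ)⁻¹ * (A k * B m))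
        = (if m = p * k % q then
            (q : ℂ) * ((q : ℂ) ^ i * (q : ℂ) ^ j * (q : ℂ)⁻¹ * (q : ℂ)⁻¹ * (A k * B m))
          else 0) := by
      intro m hm
      rw [orth q hq _]
      by_cases h : m = p * k % q
      · rw [if_pos ((dvd_sub_iff q hq (p * k) m (Finset.mem_range.mp hm)).mpr h), if_pos h]
      · rw [if_neg (fun hd => h ((dvd_sub_iff q hq (p * k) m (Finset.mem_range.mp hm)).mp hd)),
          if_neg h, zero_mul]
    calc (∑ m ∈ Finset.range q,
            ∑ t ∈ Finset.range q, eQ ((((m : ℤ) - (p * k : ℕ) : ℤ) : ℚ) / q) ^ t *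
              ((q : ℂ) ^ i * (q : ℂ) ^ j * (q : ℂ)⁻¹ * (q : ℂ)⁻¹ * (A k * B m)))
        = ∑ m ∈ Finset.range q,
            (if m = p * k % q then
              (q : ℂ) * ((q : ℂ) ^ i * (q : ℂ) ^ j * (q : ℂ)⁻¹ * (q : ℂ)⁻¹ * (A k * B m))
            else 0) := by
          refine Finset.sum_congr rfl fun m hm => ?_
          rw [← collapse m hm, Finset.sum_mul]
      _ = (q : ℂ) * ((q : ℂ) ^ i * (q : ℂ) ^ j * (q : ℂ)⁻¹ * (q : ℂ)⁻¹ *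
            (A k * B (p * k % q))) := by
          rw [Finset.sum_ite_eq' (Finset.range q) (p * k % q)]
          rw [if_pos (Finset.mem_range.mpr (Nat.mod_lt _ hq))]
      _ = (q : ℂ) ^ i * (q : ℂ) ^ j * (q : ℂ)⁻¹ * (A k * B (p * k % q)) := by
          field_simp
  rw [step2, ← Finset.mul_sum]
  rw [show (∑ k ∈ Finset.range q, A k * B (p * k % q))
      = ((∑ k ∈ Finset.range q, (Polynomial.bernoulli i).eval (1 - (k : ℚ) / q) *
          (Polynomial.bernoulli j).eval (1 - ((p * k % q : ℕ) : ℚ) / q) : ℚ) : ℂ) from by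
    push_cast
    rfl]
  rw [ratMain p q hq hco i j hi hj]
  push_cast
  have hn : i + j - 1 + 1 = i + j := by omega
  rw [show (-(q : ℂ)) ^ (i + j - 1) = (-1) ^ (i + j - 1) * (q : ℂ) ^ (i + j - 1) from by
    rw [neg_pow]]
  rw [show ((q : ℂ) ^ i * (q : ℂ) ^ j) = (q : ℂ) ^ (i + j - 1) * (q : ℂ) from by
    rw [← pow_succ, hn, pow_add]]
  rw [show ((-1 : ℂ)) ^ (i + j) = -((-1 : ℂ) ^ (i + j - 1)) from by
    rw [← hn, pow_succ, mul_neg_one, Nat.add_sub_cancel]]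
  field_simp
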